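/- Let E be a Hilbert C*-module over a unital C*-algebra A, and let T, S be bounded adjointable self-adjoint operators on E. For x ∈ E with ⟨x,x⟩ = 1, Δ_x(S)²·d_x(T)² + Δ_x(T)²·d_x(S)² ≥ (1/2)[(⟨{T,S}x,x⟩ − {⟨Tx,x⟩,⟨Sx,x⟩})² − (⟨[T,S]x,x⟩ + [⟨Tx,x⟩,⟨Sx,x⟩])²], an inequality of self-adjoint elements of A (noncommutative Heisenberg–Robertson–Schrödinger uncertainty principle, modular form). -/

import Mathlib

open scoped RightActions

/-- The December 2024 Mathlib `CStarModule` (right `Aᵐᵒᵖ`-action, inner product `A`-linear on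
the right), restated here because Mathlib's `CStarModule` now uses a left `A`-action. -/
class CStarModuleRight (A : outParam <| Type*) (E : Type*) [NonUnitalSemiring A] [StarRing A]
    [Module ℂ A] [AddCommGroup E] [Module ℂ E] [PartialOrder A] [SMul Aᵐᵒᵖ E] [Norm A] [Norm E]
    extends Inner A E where
  inner_add_right {x} {y} {z} : inner x (y + z) = inner x y + inner x z
  inner_self_nonneg {x} : 0 ≤ inner x x
  inner_self {x} : inner x x = 0 ↔ x = 0
  inner_op_smul_right {a : A} {x y : E} : inner x (y <• a) = inner x y * a
  inner_smul_right_complex {z : ℂ} {x} {y} : inner x (z • y) = z • inner x y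
  star_inner x y : star (inner x y) = inner y x
  norm_eq_sqrt_norm_inner_self x : ‖x‖ = Real.sqrt ‖inner x x‖

variable {A E : Type*} [CStarAlgebra A] [PartialOrder A] [StarOrderedRing A]
  [AddCommGroup E] [Module ℂ E] [SMul Aᵐᵒᵖ E] [Norm E] [CStarModuleRight A E]

local notation "⟪" x ", " y "⟫" => (inner A x y : A)

namespace CStarModuleRight

lemma inner_add_left {x y z : E} : ⟪x + y, z⟫ = ⟪x, z⟫ + ⟪y, z⟫ := by
  rw [← CStarModuleRight.star_inner z (x + y), CStarModuleRight.inner_add_right, star_add,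
    CStarModuleRight.star_inner, CStarModuleRight.star_inner]

lemma inner_op_smul_left {a : A} {x y : E} : ⟪x <• a, y⟫ = star a * ⟪x, y⟫ := by
  rw [← CStarModuleRight.star_inner y, CStarModuleRight.inner_op_smul_right, star_mul,
    CStarModuleRight.star_inner]

/-- The inner product as an additive map in the right variable. -/
def innerRightHom (x : E) : E →+ A :=
  AddMonoidHom.mk' (fun y => ⟪x, y⟫) (fun _ _ => CStarModuleRight.inner_add_right)

/-- The inner product as an additive map in the left variable. -/
def innerLeftHom (y : E) : E →+ A :=
  AddMonoidHom.mk' (fun x => ⟪x, y⟫) (fun _ _ => inner_add_left)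

lemma inner_sub_right {x y z : E} : ⟪x, y - z⟫ = ⟪x, y⟫ - ⟪x, z⟫ :=
  map_sub (innerRightHom (A := A) x) y z

lemma inner_sub_left {x y z : E} : ⟪x - y, z⟫ = ⟪x, z⟫ - ⟪y, z⟫ :=
  map_sub (innerLeftHom (A := A) z) x y

lemma inner_zero_right {x : E} : ⟪x, 0⟫ = 0 :=
  map_zero (innerRightHom (A := A) x)

lemma inner_smul_right_real {r : ℝ} {x y : E} : ⟪x, r • y⟫ = r • ⟪x, y⟫ := by
  have h₁ : r • y = (r : ℂ) • y := by simp
  rw [h₁, CStarModuleRight.inner_smul_right_complex, Complex.coe_smul]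

lemma inner_smul_left_real {r : ℝ} {x y : E} : ⟪r • x, y⟫ = r • ⟪x, y⟫ := by
  rw [← CStarModuleRight.star_inner y, inner_smul_right_real, star_smul, star_trivial,
    CStarModuleRight.star_inner]

/-- The C⋆-algebra-valued Cauchy-Schwarz inequality for right Hilbert C⋆-modules. -/
lemma inner_mul_inner_swap_le {x y : E} : ⟪y, x⟫ * ⟪x, y⟫ ≤ ‖x‖ ^ 2 • ⟪y, y⟫ := by
  have norm_zero' : ‖(0 : E)‖ = 0 := by
    rw [CStarModuleRight.norm_eq_sqrt_norm_inner_self (A := A),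
      (CStarModuleRight.inner_self (A := A)).mpr rfl]
    simp
  have norm_pos' : ∀ {x : E} (hx : x ≠ 0), 0 < ‖x‖ := by
    intro x hx
    rw [CStarModuleRight.norm_eq_sqrt_norm_inner_self (A := A), Real.sqrt_pos, norm_pos_iff]
    intro H
    exact hx ((CStarModuleRight.inner_self (A := A)).mp H)
  rcases eq_or_ne x 0 with h | h
  · subst h
    rw [inner_zero_right, ← CStarModuleRight.star_inner, inner_zero_right, star_zero,
      norm_zero']
    simp
  · have h₁ : ∀ (a : A),
        (0 : A) ≤ ‖x‖ ^ 2 • (star a * a) - ‖x‖ ^ 2 • (star a * ⟪x, y⟫)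
                  - ‖x‖ ^ 2 • (⟪y, x⟫ * a) + ‖x‖ ^ 2 • (‖x‖ ^ 2 • ⟪y, y⟫) := fun a => by
      calc (0 : A) ≤ ⟪x <• a - ‖x‖ ^ 2 • y, x <• a - ‖x‖ ^ 2 • y⟫ := by
                      exact CStarModuleRight.inner_self_nonneg
            _ = star a * ⟪x, x⟫ * a - ‖x‖ ^ 2 • (star a * ⟪x, y⟫)
                  - ‖x‖ ^ 2 • (⟪y, x⟫ * a) + ‖x‖ ^ 2 • (‖x‖ ^ 2 • ⟪y, y⟫) := by
                      simp only [inner_sub_right, CStarModuleRight.inner_op_smul_right,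
                        inner_sub_left, inner_op_smul_left, inner_smul_left_real, sub_mul,
                        smul_mul_assoc, inner_smul_right_real, smul_sub, mul_assoc,
                        mul_smul_comm]
                      abel
            _ ≤ ‖x‖ ^ 2 • (star a * a) - ‖x‖ ^ 2 • (star a * ⟪x, y⟫)
                  - ‖x‖ ^ 2 • (⟪y, x⟫ * a) + ‖x‖ ^ 2 • (‖x‖ ^ 2 • ⟪y, y⟫) := by
                      gcongr
                      calc _ ≤ ‖⟪x, x⟫‖ • (star a * a) :=
                          CStarAlgebra.star_left_conjugate_le_norm_smul
                            (hb := CStarModuleRight.star_inner x x)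
                        _ = (√‖⟪x, x⟫‖) ^ 2 • (star a * a) := by
                          rw [Real.sq_sqrt]
                          positivity
                        _ = ‖x‖ ^ 2 • (star a * a) := by
                          rw [← CStarModuleRight.norm_eq_sqrt_norm_inner_self]
    specialize h₁ ⟪x, y⟫
    simp only [CStarModuleRight.star_inner, sub_self, zero_sub, le_neg_add_iff_add_le,
      add_zero] at h₁
    rwa [smul_le_smul_iff_of_pos_left (pow_pos (norm_pos' h) _)] at h₁

end CStarModuleRight

/-- Noncommutative Heisenberg–Robertson–Schrödinger uncertainty principle, modular form. -/
theorem noncommutative_HRS_modular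
(T S : E →ₗ[ℂ] E)
    (hTA : ∀ (a : A) (y : E), T (y <• a) = T y <• a)
    (hSA : ∀ (a : A) (y : E), S (y <• a) = S y <• a)
    (hT : ∀ y z : E, ⟪T y, z⟫ = ⟪y, T z⟫) (hS : ∀ y z : E, ⟪S y, z⟫ = ⟪y, S z⟫)
    (hTb : ∃ C : ℝ, ∀ y : E, ‖T y‖ ≤ C * ‖y‖) (hSb : ∃ C : ℝ, ∀ y : E, ‖S y‖ ≤ C * ‖y‖)
    (x : E) (hx : ⟪x, x⟫ = 1) :
    (2 : ℝ)⁻¹ •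
      ((⟪T (S x) + S (T x), x⟫ - (⟪T x, x⟫ * ⟪S x, x⟫ + ⟪S x, x⟫ * ⟪T x, x⟫)) ^ 2 -
        (⟪T (S x) - S (T x), x⟫ + (⟪T x, x⟫ * ⟪S x, x⟫ - ⟪S x, x⟫ * ⟪T x, x⟫)) ^ 2) ≤
    (‖S x - x <• ⟪S x, x⟫‖ ^ 2 : ℝ) • (⟪T x, T x⟫ - ⟪T x, x⟫ ^ 2) +
      (‖T x - x <• ⟪T x, x⟫‖ ^ 2 : ℝ) • (⟪S x, S x⟫ - ⟪S x, x⟫ ^ 2) := by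
  set t : A := ⟪T x, x⟫ with ht_def
  set s : A := ⟪S x, x⟫ with hs_def
  have ht' : ⟪x, T x⟫ = t := (hT x x).symm
  have hs' : ⟪x, S x⟫ = s := (hS x x).symm
  have hts : star t = t := by rw [ht_def, CStarModuleRight.star_inner, ht']
  have hss : star s = s := by rw [hs_def, CStarModuleRight.star_inner, hs']
  set u : E := T x - x <• t with hu_def
  set v : E := S x - x <• s with hv_def
  have huu : ⟪u, u⟫ = ⟪T x, T x⟫ - t ^ 2 := by
    simp only [hu_def, CStarModuleRight.inner_sub_left, CStarModuleRight.inner_sub_right,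
      CStarModuleRight.inner_op_smul_left, CStarModuleRight.inner_op_smul_right, hx, ht', hts]
    simp only [← ht_def]
    noncomm_ring
  have hvv : ⟪v, v⟫ = ⟪S x, S x⟫ - s ^ 2 := by
    simp only [hv_def, CStarModuleRight.inner_sub_left, CStarModuleRight.inner_sub_right,
      CStarModuleRight.inner_op_smul_left, CStarModuleRight.inner_op_smul_right, hx, hs', hss]
    simp only [← hs_def]
    noncomm_ring
  set a : A := ⟪u, v⟫ with ha_def
  set b : A := ⟪v, u⟫ with hb_def
  have hba : b = star a := by rw [ha_def, hb_def, CStarModuleRight.star_inner]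
  have hauv : a = ⟪T x, S x⟫ - t * s := by
    simp only [ha_def, hu_def, hv_def, CStarModuleRight.inner_sub_left,
      CStarModuleRight.inner_sub_right, CStarModuleRight.inner_op_smul_left,
      CStarModuleRight.inner_op_smul_right, hx, ht', hs', hts]
    simp only [← ht_def, ← hs_def]
    noncomm_ring
  have hbvu : b = ⟪S x, T x⟫ - s * t := by
    simp only [hb_def, hu_def, hv_def, CStarModuleRight.inner_sub_left,
      CStarModuleRight.inner_sub_right, CStarModuleRight.inner_op_smul_left,
      CStarModuleRight.inner_op_smul_right, hx, ht', hs', hts, hss]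
    simp only [← ht_def, ← hs_def]
    noncomm_ring
  have hbr1 : ⟪T (S x) + S (T x), x⟫ - (t * s + s * t) = a + b := by
    rw [CStarModuleRight.inner_add_left, hT (S x) x, hS (T x) x, hauv, hbvu]
    noncomm_ring
  have hbr2 : ⟪T (S x) - S (T x), x⟫ + (t * s - s * t) = b - a := by
    rw [CStarModuleRight.inner_sub_left, hT (S x) x, hS (T x) x, hauv, hbvu]
    noncomm_ring
  rw [hbr1, hbr2]
  have key : (2 : ℝ)⁻¹ • ((a + b) ^ 2 - (b - a) ^ 2) = a * b + b * a := by
    have h2 : (a + b) ^ 2 - (b - a) ^ 2 = (a * b + b * a) + (a * b + b * a) := by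
      noncomm_ring
    rw [h2, ← two_smul ℝ, smul_smul]
    norm_num
  rw [key, ← huu, ← hvv]
  have h1 : a * b ≤ ‖v‖ ^ 2 • ⟪u, u⟫ := CStarModuleRight.inner_mul_inner_swap_le
  have h2 : b * a ≤ ‖u‖ ^ 2 • ⟪v, v⟫ := CStarModuleRight.inner_mul_inner_swap_le
  exact add_le_add h1 h2
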